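/- Let a group K act on a group H by automorphisms. If the induced action of K on the abelianization H^{ab} is trivial (equivalently [K,H] ⊆ [H,H] inside H ⋊ K), then [K, Γ_i(H)] ⊆ Γ_{i+1}(H) inside H ⋊ K for all i ≥ 1. -/

import Mathlib

open Subgroup
open scoped commutatorElement

lemma lcs_succ_eq {G : Type*} [Group G] (n : ℕ) :
    (⊤ : Subgroup G).lowerCentralSeries (n + 1) = ⁅(⊤ : Subgroup G).lowerCentralSeries n, (⊤ : Subgroup G)⁆ := rfl

/-- Three subgroups lemma modulo a normal subgroup. -/
lemma three_subgroups_mod {G : Type*} [Group G] (A B C N : Subgroup G) [N.Normal]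
    (h1 : ⁅⁅B, C⁆, A⁆ ≤ N) (h2 : ⁅⁅C, A⁆, B⁆ ≤ N) : ⁅⁅A, B⁆, C⁆ ≤ N := by
  have key : ∀ X Y Z : Subgroup G, ⁅⁅X, Y⁆, Z⁆ ≤ N ↔
      ⁅⁅X.map (QuotientGroup.mk' N), Y.map (QuotientGroup.mk' N)⁆,
        Z.map (QuotientGroup.mk' N)⁆ = ⊥ := by
    intro X Y Z
    rw [← Subgroup.map_commutator, ← Subgroup.map_commutator, Subgroup.map_eq_bot_iff,
      QuotientGroup.ker_mk']
  rw [key] at h1 h2 ⊢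
  exact Subgroup.commutator_commutator_eq_bot_of_rotate h1 h2

lemma commutator_lcs_le {G : Type*} [Group G] (i : ℕ) :
    ⁅commutator G, (⊤ : Subgroup G).lowerCentralSeries i⁆ ≤ (⊤ : Subgroup G).lowerCentralSeries (i + 2) := by
  have h : ⁅⁅(⊤ : Subgroup G).lowerCentralSeries i, (⊤ : Subgroup G)⁆, (⊤ : Subgroup G)⁆ ≤
      (⊤ : Subgroup G).lowerCentralSeries (i + 2) := by
    rw [← lcs_succ_eq, ← lcs_succ_eq]
  have h1 : ⁅⁅(⊤ : Subgroup G), (⊤ : Subgroup G).lowerCentralSeries i⁆, (⊤ : Subgroup G)⁆ ≤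
      (⊤ : Subgroup G).lowerCentralSeries (i + 2) := by
    rwa [Subgroup.commutator_comm (⊤ : Subgroup G) ((⊤ : Subgroup G).lowerCentralSeries i)]
  have h2 : ⁅⁅(⊤ : Subgroup G).lowerCentralSeries i, (⊤ : Subgroup G)⁆, (⊤ : Subgroup G)⁆ ≤
      (⊤ : Subgroup G).lowerCentralSeries (i + 2) := h
  have := three_subgroups_mod (⊤ : Subgroup G) (⊤ : Subgroup G) ((⊤ : Subgroup G).lowerCentralSeries i) _ h1 h2
  rwa [commutator_def]

/-- If `a` is central, `b` commutes with `x` and with `⁅x, y⁆`, then `⁅a*x, b*y⁆ = ⁅x, y⁆`. -/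
lemma comm_helper {G : Type*} [Group G] (a x b y : G)
    (ha : ∀ z, Commute a z) (hbx : Commute b x) (hbc : Commute b ⁅x, y⁆) :
    ⁅a * x, b * y⁆ = ⁅x, y⁆ := by
  have key : ∀ g : G, a * g * a⁻¹ = g := fun g => by
    rw [(ha g).eq, mul_inv_cancel_right]
  have h3 : ⁅a * x, b * y⁆ = ⁅x, b * y⁆ := by
    have hinv : a⁻¹ * (b * y)⁻¹ = (b * y)⁻¹ * a⁻¹ := ((ha (b * y)).inv_inv).eq
    calc ⁅a * x, b * y⁆ = a * (x * (b * y) * x⁻¹) * (a⁻¹ * (b * y)⁻¹) := by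
          rw [commutatorElement_def]; group
      _ = a * (x * (b * y) * x⁻¹) * ((b * y)⁻¹ * a⁻¹) := by rw [hinv]
      _ = a * (x * (b * y) * x⁻¹ * (b * y)⁻¹) * a⁻¹ := by group
      _ = x * (b * y) * x⁻¹ * (b * y)⁻¹ := key _
      _ = ⁅x, b * y⁆ := (commutatorElement_def _ _).symm
  rw [h3]
  calc ⁅x, b * y⁆ = (x * b) * (y * x⁻¹ * y⁻¹ * b⁻¹) := by rw [commutatorElement_def]; group
    _ = (b * x) * (y * x⁻¹ * y⁻¹ * b⁻¹) := by rw [hbx.symm.eq]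
    _ = (b * ⁅x, y⁆) * b⁻¹ := by rw [commutatorElement_def]; group
    _ = (⁅x, y⁆ * b) * b⁻¹ := by rw [hbc.eq]
    _ = ⁅x, y⁆ := by group

/-- If `K` acts trivially on `H^{ab}`, then `[K, Γ_i(H)] ⊆ Γ_{i+1}(H)` (0-based indexing:
index `i` corresponds to `Γ_{i+1}(H)`). -/
theorem action_trivial_on_lcs_quotients {H K : Type*} [Group H] [Group K]
    (φ : K →* MulAut H)
    (hab : ∀ (k : K) (h : H), φ k h * h⁻¹ ∈ commutator H)
    (i : ℕ) (k : K) (h : H) (hh : h ∈ (⊤ : Subgroup H).lowerCentralSeries i) :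
    φ k h * h⁻¹ ∈ (⊤ : Subgroup H).lowerCentralSeries (i + 1) := by
  induction i generalizing h with
  | zero => simpa [Subgroup.top_lowerCentralSeries_one, commutator_def] using hab k h
  | succ i ih =>
    set N := (⊤ : Subgroup H).lowerCentralSeries (i + 2) with hN
    -- the set of h with φ k h * h⁻¹ ∈ N is a subgroup
    let S : Subgroup H :=
      { carrier := {h : H | φ k h * h⁻¹ ∈ N}
        one_mem' := by simpa using N.one_mem
        mul_mem' := by
          intro a b hha hhb
          have heq : φ k (a * b) * (a * b)⁻¹ =
              (φ k a * a⁻¹) * (a * (φ k b * b⁻¹) * a⁻¹) := by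
            rw [map_mul]; group
          simp only [Set.mem_setOf_eq, heq]
          exact N.mul_mem hha ((Subgroup.lowerCentralSeries_normal (⊤ : Subgroup H) (i + 2)).conj_mem _ hhb a)
        inv_mem' := by
          intro a hha
          have heq : φ k a⁻¹ * a⁻¹⁻¹ = (a⁻¹ * (φ k a * a⁻¹) * a⁻¹⁻¹)⁻¹ := by
            rw [map_inv]; group
          simp only [Set.mem_setOf_eq, heq]
          exact N.inv_mem ((Subgroup.lowerCentralSeries_normal (⊤ : Subgroup H) (i + 2)).conj_mem _ hha a⁻¹) }
    suffices hS : (⊤ : Subgroup H).lowerCentralSeries (i + 1) ≤ S from hS hh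
    rw [lcs_succ_eq, Subgroup.commutator_le]
    intro x hx y _
    show φ k ⁅x, y⁆ * ⁅x, y⁆⁻¹ ∈ N
    set π := QuotientGroup.mk' N with hπ
    have mem_of_pi : ∀ g : H, π g = 1 → g ∈ N := by
      intro g hg
      exact (QuotientGroup.eq_one_iff g).mp hg
    have pi_of_mem : ∀ g : H, g ∈ N → π g = 1 := by
      intro g hg
      exact (QuotientGroup.eq_one_iff g).mpr hg
    apply mem_of_pi
    set a := φ k x * x⁻¹ with ha'
    set b := φ k y * y⁻¹ with hb'
    have haΓ : a ∈ (⊤ : Subgroup H).lowerCentralSeries (i + 1) := ih x hx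
    have hbΓ : b ∈ commutator H := hab k y
    have hax : φ k x = a * x := by rw [ha', inv_mul_cancel_right]
    have hby : φ k y = b * y := by rw [hb', inv_mul_cancel_right]
    have hcomm1 : ∀ z : H ⧸ N, Commute (π a) z := by
      intro z
      refine QuotientGroup.induction_on z ?_
      intro z
      show Commute (π a) (π z)
      apply commutatorElement_eq_one_iff_commute.mp
      rw [← map_commutatorElement]
      apply pi_of_mem
      rw [hN, lcs_succ_eq]
      exact Subgroup.commutator_mem_commutator haΓ (Subgroup.mem_top z)
    have hcomm2 : Commute (π b) (π x) := by
      apply commutatorElement_eq_one_iff_commute.mp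
      rw [← map_commutatorElement]
      exact pi_of_mem _ (commutator_lcs_le i (Subgroup.commutator_mem_commutator hbΓ hx))
    have hxyΓ : ⁅x, y⁆ ∈ (⊤ : Subgroup H).lowerCentralSeries (i + 1) := by
      rw [lcs_succ_eq]
      exact Subgroup.commutator_mem_commutator hx (Subgroup.mem_top y)
    have hcomm3 : Commute (π b) (π ⁅x, y⁆) := by
      apply Commute.symm
      apply commutatorElement_eq_one_iff_commute.mp
      rw [← map_commutatorElement]
      apply pi_of_mem
      have hle : ⁅(⊤ : Subgroup H).lowerCentralSeries (i + 1), (⊤ : Subgroup H)⁆ ≤ N := le_of_eq (lcs_succ_eq (i + 1)).symm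
      exact hle (Subgroup.commutator_mem_commutator hxyΓ (Subgroup.mem_top b))
    have key : π (φ k ⁅x, y⁆) = π ⁅x, y⁆ := by
      calc π (φ k ⁅x, y⁆) = π ⁅φ k x, φ k y⁆ := by
            rw [map_commutatorElement]
        _ = ⁅π (a * x), π (b * y)⁆ := by rw [hax, hby, map_commutatorElement]
        _ = ⁅π a * π x, π b * π y⁆ := by rw [map_mul π a x, map_mul π b y]
        _ = ⁅π x, π y⁆ := comm_helper _ _ _ _ hcomm1 hcomm2 hcomm3
        _ = π ⁅x, y⁆ := (map_commutatorElement _ _ _).symm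
    rw [map_mul, map_inv, key]
    group
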